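/- Let F be a field of characteristic zero with algebraic closure F̄. Let f, g ∈ F[z] be monic polynomials of degrees D and t respectively, with 1 ≤ t ≤ D. Let S_f and S_g denote the multisets of roots (counted with multiplicity) of f and g in F̄, and for a multiset S and integer i ≥ 1, let p_i(S) := Σ_{α∈S} α^i denote the i-th power sum. For i = 1, …, D − t set r_i := p_i(S_f) − p_i(S_g); each r_i lies in F. Define e_0 := 1 and, for j = 1, …, D − t, define e_j ∈ F recursively via Newton's identities: j·e_j = Σ_{i=1}^{j} (−1)^{i−1} e_{j−i} r_i. Set h̃(z) := Σ_{j=0}^{D−t} (−1)^j e_j z^{D−t−j}. Then g divides f in F[z] if and only if f = h̃·g. -/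

import Mathlib

/-!
The divisibility test via pseudo-quotients (Lemma `divisibility-test-to-PIT`):
for monic `f, g` of degrees `D ≥ t ≥ 1` over a field of characteristic zero,
compute the power sums `r_i := p_i(S_f) − p_i(S_g)` of the root multisets (in a
fixed algebraic closure), convert them into elementary symmetric functions
`e_j` via Newton's identities, and form the pseudo-quotient
`h̃(z) := Σ_j (−1)^j e_j z^{D−t−j}`.  Then `g ∣ f` iff `f = h̃·g`.
-/

open Finset Polynomial

lemma newton_multiset {K : Type*} [CommRing K] (v : Multiset K) (k : ℕ) :
    (k : K) * v.esymm k =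
      ∑ i ∈ Finset.Icc 1 k, (-1 : K) ^ (i - 1) * v.esymm (k - i) * (v.map (· ^ i)).sum := by
  classical
  set l := v.toList with hl
  have hlv : (l : Multiset K) = v := v.coe_toList
  set n := l.length
  set f : Fin n → K := l.get with hf
  have hmap : (Finset.univ.val.map f) = v := by
    rw [← hlv]
    have h1 : (Finset.univ.val : Multiset (Fin n)) = ↑(List.finRange n) := rfl
    rw [h1, Multiset.map_coe, List.map_get_finRange]
  have hp : ∀ j : ℕ, (∑ i, f i ^ j) = (v.map (· ^ j)).sum := by
    intro j
    rw [← hmap, Multiset.map_map]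
    rfl
  have key := congrArg (MvPolynomial.aeval f) (MvPolynomial.mul_esymm_eq_sum (Fin n) K k)
  simp only [map_mul, map_natCast, map_sum, map_pow, map_neg, map_one,
    MvPolynomial.aeval_esymm_eq_multiset_esymm, MvPolynomial.psum, MvPolynomial.aeval_X,
    hmap, hp] at key
  rw [key, Finset.mul_sum]
  refine Finset.sum_bij' (fun a _ => a.2) (fun i _ => (k - i, i)) ?_ ?_ ?_ ?_ ?_
  · intro a ha
    simp only [Finset.mem_filter, Finset.HasAntidiagonal.mem_antidiagonal] at ha
    simp only [Finset.mem_Icc]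
    omega
  · intro i hi
    simp only [Finset.mem_Icc] at hi
    simp only [Finset.mem_filter, Finset.HasAntidiagonal.mem_antidiagonal]
    omega
  · intro a ha
    simp only [Finset.mem_filter, Finset.HasAntidiagonal.mem_antidiagonal] at ha
    ext <;> simp <;> omega
  · intro i hi; rfl
  · intro a ha
    simp only [Finset.mem_filter, Finset.HasAntidiagonal.mem_antidiagonal] at ha
    have hsign : (-1 : K) ^ (k + 1) * (-1 : K) ^ a.1 = (-1 : K) ^ (a.2 - 1) := by
      rw [← pow_add]
      have : k + 1 + a.1 = (a.2 - 1) + 2 * (a.1 + 1) := by omega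
      rw [this, pow_add, pow_mul]
      simp
    have h1 : a.1 = k - a.2 := by omega
    rw [← mul_assoc, ← mul_assoc, hsign, h1]

lemma esymm_zero' {K : Type*} [CommRing K] (v : Multiset K) : v.esymm 0 = 1 := by
  simp [Multiset.esymm]

lemma esymm_of_card_lt {K : Type*} [CommRing K] {v : Multiset K} {j : ℕ}
    (h : Multiset.card v < j) : v.esymm j = 0 := by
  have : j = Multiset.card v + (j - Multiset.card v) := by omega
  rw [Multiset.esymm, this, Multiset.powersetCard_card_add _ (by omega)]
  simp

lemma mem_of_neg_one_pow_mul_mem {K : Type*} [CommRing K] (S : Subring K) {x : K} (j : ℕ)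
    (h : (-1 : K) ^ j * x ∈ S) : x ∈ S := by
  have h2 := S.mul_mem (S.pow_mem (S.neg_mem S.one_mem) j) h
  rwa [← mul_assoc, ← pow_add, Even.neg_one_pow ⟨j, rfl⟩, one_mul] at h2

lemma psum_mem {K : Type*} [CommRing K] (S : Subring K) (v : Multiset K)
    (he : ∀ j, 1 ≤ j → v.esymm j ∈ S) : ∀ i, (v.map (· ^ i)).sum ∈ S := by
  intro i
  induction i using Nat.strong_induction_on with
  | _ i ih =>
    rcases Nat.eq_zero_or_pos i with hi | hi
    · subst hi
      have : (v.map (· ^ 0)).sum = ((Multiset.card v : ℕ) : K) := by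
        simp [pow_zero]
      rw [this]; exact natCast_mem S _
    · obtain ⟨m, rfl⟩ : ∃ m, i = m + 1 := ⟨i - 1, by omega⟩
      have hN := newton_multiset v (m + 1)
      have hins : Finset.Icc 1 (m + 1) = insert (m + 1) (Finset.Icc 1 m) := by
        ext x; simp [Finset.mem_Icc]; omega
      rw [hins, Finset.sum_insert (by simp)] at hN
      simp only [Nat.add_sub_cancel, Nat.sub_self, esymm_zero', mul_one] at hN
      set P := (v.map (· ^ (m + 1))).sum with hP
      have key : (-1 : K) ^ m * P =
          ((m + 1 : ℕ) : K) * v.esymm (m + 1) -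
            ∑ i ∈ Finset.Icc 1 m, (-1 : K) ^ (i - 1) * v.esymm (m + 1 - i) * (v.map (· ^ i)).sum := by
        linear_combination -hN
      apply mem_of_neg_one_pow_mul_mem S m
      rw [key]
      refine S.sub_mem (S.mul_mem (natCast_mem S _) (he _ (by omega))) ?_
      refine Subring.sum_mem S ?_
      intro j hj
      simp only [Finset.mem_Icc] at hj
      refine S.mul_mem (S.mul_mem (S.pow_mem (S.neg_mem S.one_mem) _) ?_) (ih j (by omega))
      exact he _ (by omega)

lemma esymm_unique {K : Type*} [Field K] [CharZero K] (v : Multiset K) (m : ℕ)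
    (e : ℕ → K) (he0 : e 0 = 1)
    (herec : ∀ j : ℕ, 1 ≤ j → j ≤ m →
      (j : K) * e j = ∑ i ∈ Finset.Icc 1 j, (-1 : K) ^ (i - 1) * e (j - i) * (v.map (· ^ i)).sum) :
    ∀ j, j ≤ m → e j = v.esymm j := by
  intro j
  induction j using Nat.strong_induction_on with
  | _ j ih =>
    intro hj
    rcases Nat.eq_zero_or_pos j with h0 | h0
    · subst h0; rw [he0, esymm_zero']
    · have h1 := herec j h0 hj
      have h2 := newton_multiset v j
      have hsum : ∑ i ∈ Finset.Icc 1 j, (-1 : K) ^ (i - 1) * e (j - i) * (v.map (· ^ i)).sum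
          = ∑ i ∈ Finset.Icc 1 j, (-1 : K) ^ (i - 1) * v.esymm (j - i) * (v.map (· ^ i)).sum := by
        refine Finset.sum_congr rfl ?_
        intro i hi
        simp only [Finset.mem_Icc] at hi
        rw [ih (j - i) (by omega) (by omega)]
      rw [hsum, ← h2] at h1
      exact mul_left_cancel₀ (Nat.cast_ne_zero.mpr (by omega)) h1

lemma esymm_roots_mem {F K : Type*} [Field F] [Field K] [IsAlgClosed K] (φ : F →+* K)
    (p : Polynomial F) (hp : p.Monic) (j : ℕ) :
    ((p.map φ).roots).esymm j ∈ φ.range := by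
  have hpm : (p.map φ).Monic := hp.map φ
  have hcard : Multiset.card (p.map φ).roots = (p.map φ).natDegree :=
    Polynomial.splits_iff_card_roots.mp (IsAlgClosed.splits _)
  by_cases hj : j ≤ (p.map φ).natDegree
  · have hc := Polynomial.coeff_eq_esymm_roots_of_card hcard
      (k := (p.map φ).natDegree - j) (by omega)
    rw [hpm.leadingCoeff, one_mul, Nat.sub_sub_self hj] at hc
    apply mem_of_neg_one_pow_mul_mem _ j
    rw [← hc, Polynomial.coeff_map]
    exact ⟨_, rfl⟩
  · rw [esymm_of_card_lt (by omega)]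
    exact Subring.zero_mem _

theorem stmt_12 {F : Type*} [Field F] [CharZero F] (D t : ℕ)
    (ht1 : 1 ≤ t) (htD : t ≤ D)
    (f g : Polynomial F) (hf : f.Monic) (hg : g.Monic)
    (hfD : f.natDegree = D) (hgt : g.natDegree = t)
    -- `r i = p_i(S_f) − p_i(S_g)`, power sums of the root multisets in `F̄`:
    (r : ℕ → AlgebraicClosure F)
    (hr : ∀ i : ℕ, r i =
      ((f.map (algebraMap F (AlgebraicClosure F))).roots.map (· ^ i)).sum -
      ((g.map (algebraMap F (AlgebraicClosure F))).roots.map (· ^ i)).sum)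
    -- `e j` defined by Newton's identities: `e 0 = 1` and
    -- `j·e_j = Σ_{i=1}^{j} (−1)^{i−1} e_{j−i} r_i` for `1 ≤ j ≤ D − t`:
    (e : ℕ → AlgebraicClosure F) (he0 : e 0 = 1)
    (herec : ∀ j : ℕ, 1 ≤ j → j ≤ D - t →
      (j : AlgebraicClosure F) * e j =
        ∑ i ∈ Finset.Icc 1 j, (-1 : AlgebraicClosure F) ^ (i - 1) * e (j - i) * r i) :
    -- each `r i` (for `1 ≤ i ≤ D − t`) lies in `F`, and `g ∣ f` iff `f = h̃·g`:
    (∀ i : ℕ, 1 ≤ i → i ≤ D - t →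
      r i ∈ (algebraMap F (AlgebraicClosure F)).range) ∧
    (g ∣ f ↔
      f.map (algebraMap F (AlgebraicClosure F)) =
        (∑ j ∈ Finset.range (D - t + 1),
            Polynomial.C ((-1 : AlgebraicClosure F) ^ j * e j) *
              Polynomial.X ^ (D - t - j)) *
          g.map (algebraMap F (AlgebraicClosure F))) := by
  set φ := algebraMap F (AlgebraicClosure F) with hφ
  have hgm : (g.map φ).Monic := hg.map φ
  constructor
  · intro i hi1 hi2
    rw [hr i]
    exact Subring.sub_mem _
      (psum_mem _ _ (fun j _ => esymm_roots_mem φ f hf j) i)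
      (psum_mem _ _ (fun j _ => esymm_roots_mem φ g hg j) i)
  constructor
  · rintro ⟨q, hq⟩
    have hqm : q.Monic := hg.of_mul_monic_left (hq ▸ hf)
    have hqd : q.natDegree = D - t := by
      have h1 := Polynomial.natDegree_mul hg.ne_zero hqm.ne_zero
      rw [← hq, hfD, hgt] at h1; omega
    have hqmm : (q.map φ).Monic := hqm.map φ
    set v := (q.map φ).roots with hv
    have hvcard : Multiset.card v = D - t := by
      rw [hv, Polynomial.splits_iff_card_roots.mp (IsAlgClosed.splits _),
        hqm.natDegree_map, hqd]
    have hroots : (f.map φ).roots = (g.map φ).roots + v := by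
      rw [hq, Polynomial.map_mul, Polynomial.roots_mul (mul_ne_zero hgm.ne_zero hqmm.ne_zero)]
    have hre : ∀ i, r i = (v.map (· ^ i)).sum := by
      intro i
      rw [hr i, hroots, Multiset.map_add, Multiset.sum_add]
      ring
    have hE : ∀ j, j ≤ D - t → e j = v.esymm j := by
      apply esymm_unique v (D - t) e he0
      intro j hj1 hj2
      rw [herec j hj1 hj2]
      exact Finset.sum_congr rfl fun i _ => by rw [hre i]
    have hqeq : q.map φ = ∑ j ∈ Finset.range (D - t + 1),
        Polynomial.C ((-1 : AlgebraicClosure F) ^ j * e j) * Polynomial.X ^ (D - t - j) := by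
      rw [(IsAlgClosed.splits _).eq_prod_roots_of_monic hqmm,
        ← hv, Multiset.prod_X_sub_X_eq_sum_esymm v, hvcard]
      refine Finset.sum_congr rfl ?_
      intro j hj
      rw [hE j (Nat.lt_succ_iff.mp (Finset.mem_range.mp hj)), map_mul, map_pow, map_neg,
        map_one, mul_assoc]
    rw [hq, Polynomial.map_mul, hqeq]
    ring
  · intro h
    exact (Polynomial.map_dvd_map' φ).mp (Dvd.intro_left _ h.symm)
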